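/- Let μ be a Borel measure on ℝ that is log-concave on convex sets. Then for every compact interval A ⊂ ℝ and all symmetric compact intervals B = [−b,b], C = [−c,c] (b, c ≥ 0), one has μ(A)·μ(A+B+C) ≤ μ(A+B)·μ(A+C). -/

import Mathlib

open MeasureTheory Set Filter Topology Pointwise

noncomputable section

/-- `μ` is log-concave on convex sets of `ℝ`:
`μ((1−λ)K + λL) ≥ μ(K)^{1−λ}·μ(L)^λ` for all convex `K, L ⊆ ℝ` and `λ ∈ [0,1]`. -/
def IsLogConcaveOnConvexSetsReal (μ : Measure ℝ) : Prop :=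
  ∀ K L : Set ℝ, Convex ℝ K → Convex ℝ L →
    ∀ lam ∈ Icc (0:ℝ) 1,
      μ K ^ (1 - lam) * μ L ^ lam ≤ μ ((1 - lam) • K + lam • L)

lemma Icc_add_Icc_real {p q r s : ℝ} (h1 : p ≤ q) (h2 : r ≤ s) :
    Icc p q + Icc r s = Icc (p + r) (q + s) := by
  apply Subset.antisymm
  · rintro x ⟨y, hy, z, hz, rfl⟩
    exact ⟨add_le_add hy.1 hz.1, add_le_add hy.2 hz.2⟩
  · rintro x ⟨hx1, hx2⟩
    refine ⟨max p (x - s), ⟨le_max_left _ _, max_le h1 (by linarith)⟩,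
      x - max p (x - s), ⟨?_, ?_⟩, by ring⟩
    · rcases max_cases p (x - s) with ⟨h, _⟩ | ⟨h, _⟩ <;> rw [h] <;> linarith
    · rcases max_cases p (x - s) with ⟨h, _⟩ | ⟨h, _⟩ <;> rw [h] <;> linarith

/-- A log-concave measure on `ℝ` is log-submodular for a compact interval `A` and
symmetric compact intervals `B = [−b,b]`, `C = [−c,c]`:
`μ(A)·μ(A+B+C) ≤ μ(A+B)·μ(A+C)`. -/
theorem log_submodularity_on_line_for_symmetric_intervals
    (μ : Measure ℝ) (hμ : IsLogConcaveOnConvexSetsReal μ)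
    (a₁ a₂ : ℝ) (ha : a₁ ≤ a₂) (b c : ℝ) (hb : 0 ≤ b) (hc : 0 ≤ c) :
    μ (Icc a₁ a₂) * μ (Icc a₁ a₂ + Icc (-b) b + Icc (-c) c)
      ≤ μ (Icc a₁ a₂ + Icc (-b) b) * μ (Icc a₁ a₂ + Icc (-c) c) := by
  have hbb : (-b : ℝ) ≤ b := by linarith
  have hcc : (-c : ℝ) ≤ c := by linarith
  rw [Icc_add_Icc_real ha hbb, Icc_add_Icc_real (by linarith) hcc,
    Icc_add_Icc_real ha hcc]
  rcases eq_or_lt_of_le hb with rfl | hb'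
  · norm_num
  rcases eq_or_lt_of_le hc with rfl | hc'
  · rw [mul_comm (μ (Icc (a₁ + -b) (a₂ + b)))]
    norm_num
  set t := b + c with htdef
  have ht : 0 < t := by positivity
  have ht' : t ≠ 0 := ht.ne'
  have hl1 : (0:ℝ) < b / t := by positivity
  have hl2 : (0:ℝ) < c / t := by positivity
  have hsum : b / t + c / t = 1 := by field_simp; exact htdef.symm
  have key : ∀ lam : ℝ, 0 < lam → 0 < 1 - lam →
      μ (Icc a₁ a₂) ^ (1 - lam) * μ (Icc (a₁ + -b + -c) (a₂ + b + c)) ^ lam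
        ≤ μ (Icc (a₁ - lam * t) (a₂ + lam * t)) := by
    intro lam h1 h2
    have := hμ (Icc a₁ a₂) (Icc (a₁ + -b + -c) (a₂ + b + c)) (convex_Icc _ _)
      (convex_Icc _ _) lam ⟨h1.le, by linarith⟩
    rwa [LinearOrderedField.smul_Icc h2, LinearOrderedField.smul_Icc h1,
      Icc_add_Icc_real (by nlinarith) (by nlinarith),
      show (1 - lam) * a₁ + lam * (a₁ + -b + -c) = a₁ - lam * t by rw [htdef]; ring,
      show (1 - lam) * a₂ + lam * (a₂ + b + c) = a₂ + lam * t by rw [htdef]; ring] at this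
  have hB := key (b / t) hl1 (by linarith)
  have hC := key (c / t) hl2 (by linarith)
  rw [show b / t * t = b by field_simp, show a₁ - b = a₁ + -b by ring] at hB
  rw [show c / t * t = c by field_simp, show a₁ - c = a₁ + -c by ring] at hC
  calc μ (Icc a₁ a₂) * μ (Icc (a₁ + -b + -c) (a₂ + b + c))
      = (μ (Icc a₁ a₂) ^ (1 - b / t) * μ (Icc (a₁ + -b + -c) (a₂ + b + c)) ^ (b / t))
        * (μ (Icc a₁ a₂) ^ (1 - c / t) * μ (Icc (a₁ + -b + -c) (a₂ + b + c)) ^ (c / t)) := by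
        rw [show (1 : ℝ) - b / t = c / t by linarith, show (1 : ℝ) - c / t = b / t by linarith]
        rw [mul_mul_mul_comm, ← ENNReal.rpow_add_of_nonneg _ _ hl2.le hl1.le,
          ← ENNReal.rpow_add_of_nonneg _ _ hl1.le hl2.le]
        rw [show c / t + b / t = 1 by linarith, hsum, ENNReal.rpow_one, ENNReal.rpow_one]
    _ ≤ μ (Icc (a₁ + -b) (a₂ + b)) * μ (Icc (a₁ + -c) (a₂ + c)) := mul_le_mul' hB hC
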